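/- Let r = 0.8 and c = 1/(8^r - 6^r). Let t, w, x, y, z be nonnegative reals with z < 1.98·(t + w + x + y) and 0 < t ≤ 2.072·min{w/1.036, x, y, z/5.884}. Then w^r + x^r + y^r + c·z^r ≥ (t + w + x + y + z)^r. -/

import Mathlib

open Real


lemma rp_low (a q : ℝ) (hq : 0 ≤ q) (ha : 0 ≤ a) (h : q ^ 5 ≤ a ^ 4) :
    q ≤ a ^ (0.8:ℝ) := by
  have h1 : q = ((q ^ (5:ℕ) : ℝ)) ^ ((5:ℝ)⁻¹) := by
    rw [← Real.rpow_natCast q 5, ← Real.rpow_mul hq]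
    norm_num
  have h2 : a ^ (0.8:ℝ) = ((a ^ (4:ℕ) : ℝ)) ^ ((5:ℝ)⁻¹) := by
    rw [← Real.rpow_natCast a 4, ← Real.rpow_mul ha]
    norm_num
  rw [h1, h2]
  exact Real.rpow_le_rpow (by positivity) (by exact_mod_cast h) (by norm_num)

lemma rp_high (a q : ℝ) (hq : 0 ≤ q) (ha : 0 ≤ a) (h : a ^ 4 ≤ q ^ 5) :
    a ^ (0.8:ℝ) ≤ q := by
  have h1 : q = ((q ^ (5:ℕ) : ℝ)) ^ ((5:ℝ)⁻¹) := by
    rw [← Real.rpow_natCast q 5, ← Real.rpow_mul hq]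
    norm_num
  have h2 : a ^ (0.8:ℝ) = ((a ^ (4:ℕ) : ℝ)) ^ ((5:ℝ)⁻¹) := by
    rw [← Real.rpow_natCast a 4, ← Real.rpow_mul ha]
    norm_num
  rw [h1, h2]
  exact Real.rpow_le_rpow (by positivity) (by exact_mod_cast h) (by norm_num)

lemma rearr (a b D : ℝ) (ha : 0 ≤ a) (hab : a ≤ b) (hD : 0 ≤ D) :
    (b + D) ^ (0.8:ℝ) + a ^ (0.8:ℝ) ≤ (a + D) ^ (0.8:ℝ) + b ^ (0.8:ℝ) := by
  rcases eq_or_lt_of_le hD with rfl | hD'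
  · simp only [add_zero]; linarith
  rcases eq_or_lt_of_le hab with rfl | hab'
  · linarith
  have hf := Real.concaveOn_rpow (p := (0.8:ℝ)) (by norm_num) (by norm_num)
  set lam : ℝ := D / (b + D - a) with hlam
  have hden : 0 < b + D - a := by linarith
  have hl0 : 0 < lam := by positivity
  have hl1 : lam < 1 := by
    rw [hlam, div_lt_one hden]; linarith
  have hb0 : (0:ℝ) ≤ b := le_trans ha hab
  have hbD : (0:ℝ) ≤ b + D := by linarith
  have e1 : (1 - lam) * a + lam * (b + D) = a + D := by
    have hlD : lam * (b + D - a) = D := by rw [hlam]; exact div_mul_cancel₀ _ hden.ne'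
    linear_combination hlD
  have e2 : lam * a + (1 - lam) * (b + D) = b := by
    have hlD : lam * (b + D - a) = D := by rw [hlam]; exact div_mul_cancel₀ _ hden.ne'
    linear_combination (-1 : ℝ) * hlD
  have c1 := hf.2 (Set.mem_Ici.2 ha) (Set.mem_Ici.2 hbD)
      (show (0:ℝ) ≤ 1 - lam by linarith) (le_of_lt hl0) (by ring)
  have c2 := hf.2 (Set.mem_Ici.2 ha) (Set.mem_Ici.2 hbD)
      (le_of_lt hl0) (show (0:ℝ) ≤ 1 - lam by linarith) (by ring)
  simp only [smul_eq_mul] at c1 c2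
  rw [e1] at c1
  rw [e2] at c2
  linarith [c1, c2]


lemma rp_low_mono (a u q : ℝ) (hq : 0 ≤ q) (ha : 0 ≤ a) (hau : a ≤ u)
    (h : q ^ 5 ≤ a ^ 4) : q ≤ u ^ (0.8:ℝ) :=
  le_trans (rp_low a q hq ha h) (Real.rpow_le_rpow ha hau (by norm_num))

lemma rp_high_mono (b u q : ℝ) (hq : 0 ≤ q) (hu : 0 ≤ u) (hub : u ≤ b)
    (h : b ^ 4 ≤ q ^ 5) : u ^ (0.8:ℝ) ≤ q :=
  le_trans (Real.rpow_le_rpow hu hub (by norm_num)) (rp_high b q hq (le_trans hu hub) h)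

lemma c_bound : (921591/1000000:ℝ) ≤ 1 / ((8:ℝ) ^ (0.8:ℝ) - (6:ℝ) ^ (0.8:ℝ)) := by
  have h8 : (8:ℝ) ^ (0.8:ℝ) ≤ (131951/25000:ℝ) := rp_high 8 _ (by norm_num) (by norm_num) (by norm_num)
  have l6 : (13103/3125:ℝ) ≤ (6:ℝ) ^ (0.8:ℝ) := rp_low 6 _ (by norm_num) (by norm_num) (by norm_num)
  have l8 : (527803/100000:ℝ) ≤ (8:ℝ) ^ (0.8:ℝ) := rp_low 8 _ (by norm_num) (by norm_num) (by norm_num)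
  have h6 : (6:ℝ) ^ (0.8:ℝ) ≤ (419297/100000:ℝ) := rp_high 6 _ (by norm_num) (by norm_num) (by norm_num)
  have hpos : (0:ℝ) < (8:ℝ) ^ (0.8:ℝ) - (6:ℝ) ^ (0.8:ℝ) := by linarith
  rw [le_div_iff₀ hpos]
  linarith

lemma hm_low : (6979/12500:ℝ) ≤ ((125/259:ℝ)) ^ (0.8:ℝ) :=
  rp_low _ _ (by norm_num) (by norm_num) (by norm_num)

lemma hh_low : (28717/50000:ℝ) ≤ ((1:ℝ)/2) ^ (0.8:ℝ) :=
  rp_low _ _ (by norm_num) (by norm_num) (by norm_num)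

set_option maxHeartbeats 4000000 in
lemma lemA (c u : ℝ) (hc : (921591/1000000:ℝ) ≤ c) (h0 : (1471/518:ℝ) ≤ u)
    (h1 : u ≤ (126423/25900:ℝ)) :
    2 * ((125/259:ℝ)) ^ (0.8:ℝ) + ((1:ℝ)/2) ^ (0.8:ℝ) + c * u ^ (0.8:ℝ) ≥ ((1277/518:ℝ) + u) ^ (0.8:ℝ) := by
  have hc0 : (0:ℝ) ≤ c := le_trans (by norm_num) hc
  have hm := hm_low
  have hh := hh_low
  by_cases hb0 : u ≤ (573/200:ℝ)
  · have l1 : (57619/25000:ℝ) ≤ u ^ (0.8:ℝ) := rp_low_mono (1471/518:ℝ) u _ (by norm_num) (by norm_num) h0 (by norm_num)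
    have l2 : ((1277/518:ℝ) + u) ^ (0.8:ℝ) ≤ (47677/12500:ℝ) := rp_high_mono ((276107/51800:ℝ)) _ _ (by norm_num) (by linarith only [h0]) (by linarith only [hb0]) (by norm_num)
    have l3 : (921591/1000000:ℝ) * (57619/25000:ℝ) ≤ c * u ^ (0.8:ℝ) := mul_le_mul hc l1 (by norm_num) hc0
    linarith only [l2, l3, hm, hh]
  have ha0 : (573/200:ℝ) ≤ u := le_of_not_ge hb0
  clear hb0
  by_cases hb1 : u ≤ (2891/1000:ℝ)
  · have l1 : (232113/100000:ℝ) ≤ u ^ (0.8:ℝ) := rp_low_mono (573/200:ℝ) u _ (by norm_num) (by norm_num) ha0 (by norm_num)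
    have l2 : ((1277/518:ℝ) + u) ^ (0.8:ℝ) ≤ (382903/100000:ℝ) := rp_high_mono ((1387269/259000:ℝ)) _ _ (by norm_num) (by linarith only [h0]) (by linarith only [hb1]) (by norm_num)
    have l3 : (921591/1000000:ℝ) * (232113/100000:ℝ) ≤ c * u ^ (0.8:ℝ) := mul_le_mul hc l1 (by norm_num) hc0
    linarith only [l2, l3, hm, hh]
  have ha1 : (2891/1000:ℝ) ≤ u := le_of_not_ge hb1
  clear hb1 ha0
  by_cases hb2 : u ≤ (1459/500:ℝ)
  · have l1 : (58449/25000:ℝ) ≤ u ^ (0.8:ℝ) := rp_low_mono (2891/1000:ℝ) u _ (by norm_num) (by norm_num) ha1 (by norm_num)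
    have l2 : ((1277/518:ℝ) + u) ^ (0.8:ℝ) ≤ (384447/100000:ℝ) := rp_high_mono ((697131/129500:ℝ)) _ _ (by norm_num) (by linarith only [h0]) (by linarith only [hb2]) (by norm_num)
    have l3 : (921591/1000000:ℝ) * (58449/25000:ℝ) ≤ c * u ^ (0.8:ℝ) := mul_le_mul hc l1 (by norm_num) hc0
    linarith only [l2, l3, hm, hh]
  have ha2 : (1459/500:ℝ) ≤ u := le_of_not_ge hb2
  clear hb2 ha1
  by_cases hb3 : u ≤ (1473/500:ℝ)
  · have l1 : (235541/100000:ℝ) ≤ u ^ (0.8:ℝ) := rp_low_mono (1459/500:ℝ) u _ (by norm_num) (by norm_num) ha2 (by norm_num)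
    have l2 : ((1277/518:ℝ) + u) ^ (0.8:ℝ) ≤ (193023/50000:ℝ) := rp_high_mono ((700757/129500:ℝ)) _ _ (by norm_num) (by linarith only [h0]) (by linarith only [hb3]) (by norm_num)
    have l3 : (921591/1000000:ℝ) * (235541/100000:ℝ) ≤ c * u ^ (0.8:ℝ) := mul_le_mul hc l1 (by norm_num) hc0
    linarith only [l2, l3, hm, hh]
  have ha3 : (1473/500:ℝ) ≤ u := le_of_not_ge hb3
  clear hb3 ha2
  by_cases hb4 : u ≤ (372/125:ℝ)
  · have l1 : (59337/25000:ℝ) ≤ u ^ (0.8:ℝ) := rp_low_mono (1473/500:ℝ) u _ (by norm_num) (by norm_num) ha3 (by norm_num)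
    have l2 : ((1277/518:ℝ) + u) ^ (0.8:ℝ) ≤ (387757/100000:ℝ) := rp_high_mono ((352321/64750:ℝ)) _ _ (by norm_num) (by linarith only [h0]) (by linarith only [hb4]) (by norm_num)
    have l3 : (921591/1000000:ℝ) * (59337/25000:ℝ) ≤ c * u ^ (0.8:ℝ) := mul_le_mul hc l1 (by norm_num) hc0
    linarith only [l2, l3, hm, hh]
  have ha4 : (372/125:ℝ) ≤ u := le_of_not_ge hb4
  clear hb4 ha3
  by_cases hb5 : u ≤ (3007/1000:ℝ)
  · have l1 : (239279/100000:ℝ) ≤ u ^ (0.8:ℝ) := rp_low_mono (372/125:ℝ) u _ (by norm_num) (by norm_num) ha4 (by norm_num)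
    have l2 : ((1277/518:ℝ) + u) ^ (0.8:ℝ) ≤ (389523/100000:ℝ) := rp_high_mono ((1417313/259000:ℝ)) _ _ (by norm_num) (by linarith only [h0]) (by linarith only [hb5]) (by norm_num)
    have l3 : (921591/1000000:ℝ) * (239279/100000:ℝ) ≤ c * u ^ (0.8:ℝ) := mul_le_mul hc l1 (by norm_num) hc0
    linarith only [l2, l3, hm, hh]
  have ha5 : (3007/1000:ℝ) ≤ u := le_of_not_ge hb5
  clear hb5 ha4
  by_cases hb6 : u ≤ (3039/1000:ℝ)
  · have l1 : (241271/100000:ℝ) ≤ u ^ (0.8:ℝ) := rp_low_mono (3007/1000:ℝ) u _ (by norm_num) (by norm_num) ha5 (by norm_num)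
    have l2 : ((1277/518:ℝ) + u) ^ (0.8:ℝ) ≤ (24459/6250:ℝ) := rp_high_mono ((1425601/259000:ℝ)) _ _ (by norm_num) (by linarith only [h0]) (by linarith only [hb6]) (by norm_num)
    have l3 : (921591/1000000:ℝ) * (241271/100000:ℝ) ≤ c * u ^ (0.8:ℝ) := mul_le_mul hc l1 (by norm_num) hc0
    linarith only [l2, l3, hm, hh]
  have ha6 : (3039/1000:ℝ) ≤ u := le_of_not_ge hb6
  clear hb6 ha5
  by_cases hb7 : u ≤ (384/125:ℝ)
  · have l1 : (243323/100000:ℝ) ≤ u ^ (0.8:ℝ) := rp_low_mono (3039/1000:ℝ) u _ (by norm_num) (by norm_num) ha6 (by norm_num)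
    have l2 : ((1277/518:ℝ) + u) ^ (0.8:ℝ) ≤ (19661/5000:ℝ) := rp_high_mono ((358537/64750:ℝ)) _ _ (by norm_num) (by linarith only [h0]) (by linarith only [hb7]) (by norm_num)
    have l3 : (921591/1000000:ℝ) * (243323/100000:ℝ) ≤ c * u ^ (0.8:ℝ) := mul_le_mul hc l1 (by norm_num) hc0
    linarith only [l2, l3, hm, hh]
  have ha7 : (384/125:ℝ) ≤ u := le_of_not_ge hb7
  clear hb7 ha6
  by_cases hb8 : u ≤ (3107/1000:ℝ)
  · have l1 : (49087/20000:ℝ) ≤ u ^ (0.8:ℝ) := rp_low_mono (384/125:ℝ) u _ (by norm_num) (by norm_num) ha7 (by norm_num)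
    have l2 : ((1277/518:ℝ) + u) ^ (0.8:ℝ) ≤ (395207/100000:ℝ) := rp_high_mono ((1443213/259000:ℝ)) _ _ (by norm_num) (by linarith only [h0]) (by linarith only [hb8]) (by norm_num)
    have l3 : (921591/1000000:ℝ) * (49087/20000:ℝ) ≤ c * u ^ (0.8:ℝ) := mul_le_mul hc l1 (by norm_num) hc0
    linarith only [l2, l3, hm, hh]
  have ha8 : (3107/1000:ℝ) ≤ u := le_of_not_ge hb8
  clear hb8 ha7
  by_cases hb9 : u ≤ (3143/1000:ℝ)
  · have l1 : (247669/100000:ℝ) ≤ u ^ (0.8:ℝ) := rp_low_mono (3107/1000:ℝ) u _ (by norm_num) (by norm_num) ha8 (by norm_num)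
    have l2 : ((1277/518:ℝ) + u) ^ (0.8:ℝ) ≤ (397249/100000:ℝ) := rp_high_mono ((1452537/259000:ℝ)) _ _ (by norm_num) (by linarith only [h0]) (by linarith only [hb9]) (by norm_num)
    have l3 : (921591/1000000:ℝ) * (247669/100000:ℝ) ≤ c * u ^ (0.8:ℝ) := mul_le_mul hc l1 (by norm_num) hc0
    linarith only [l2, l3, hm, hh]
  have ha9 : (3143/1000:ℝ) ≤ u := le_of_not_ge hb9
  clear hb9 ha8
  by_cases hb10 : u ≤ (159/50:ℝ)
  · have l1 : (124981/50000:ℝ) ≤ u ^ (0.8:ℝ) := rp_low_mono (3143/1000:ℝ) u _ (by norm_num) (by norm_num) ha9 (by norm_num)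
    have l2 : ((1277/518:ℝ) + u) ^ (0.8:ℝ) ≤ (24959/6250:ℝ) := rp_high_mono ((36553/6475:ℝ)) _ _ (by norm_num) (by linarith only [h0]) (by linarith only [hb10]) (by norm_num)
    have l3 : (921591/1000000:ℝ) * (124981/50000:ℝ) ≤ c * u ^ (0.8:ℝ) := mul_le_mul hc l1 (by norm_num) hc0
    linarith only [l2, l3, hm, hh]
  have ha10 : (159/50:ℝ) ≤ u := le_of_not_ge hb10
  clear hb10 ha9
  by_cases hb11 : u ≤ (3219/1000:ℝ)
  · have l1 : (126157/50000:ℝ) ≤ u ^ (0.8:ℝ) := rp_low_mono (159/50:ℝ) u _ (by norm_num) (by norm_num) ha10 (by norm_num)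
    have l2 : ((1277/518:ℝ) + u) ^ (0.8:ℝ) ≤ (8031/2000:ℝ) := rp_high_mono ((1472221/259000:ℝ)) _ _ (by norm_num) (by linarith only [h0]) (by linarith only [hb11]) (by norm_num)
    have l3 : (921591/1000000:ℝ) * (126157/50000:ℝ) ≤ c * u ^ (0.8:ℝ) := mul_le_mul hc l1 (by norm_num) hc0
    linarith only [l2, l3, hm, hh]
  have ha11 : (3219/1000:ℝ) ≤ u := le_of_not_ge hb11
  clear hb11 ha10
  by_cases hb12 : u ≤ (3259/1000:ℝ)
  · have l1 : (127393/50000:ℝ) ≤ u ^ (0.8:ℝ) := rp_low_mono (3219/1000:ℝ) u _ (by norm_num) (by norm_num) ha11 (by norm_num)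
    have l2 : ((1277/518:ℝ) + u) ^ (0.8:ℝ) ≤ (403809/100000:ℝ) := rp_high_mono ((1482581/259000:ℝ)) _ _ (by norm_num) (by linarith only [h0]) (by linarith only [hb12]) (by norm_num)
    have l3 : (921591/1000000:ℝ) * (127393/50000:ℝ) ≤ c * u ^ (0.8:ℝ) := mul_le_mul hc l1 (by norm_num) hc0
    linarith only [l2, l3, hm, hh]
  have ha12 : (3259/1000:ℝ) ≤ u := le_of_not_ge hb12
  clear hb12 ha11
  by_cases hb13 : u ≤ (33/10:ℝ)
  · have l1 : (64329/25000:ℝ) ≤ u ^ (0.8:ℝ) := rp_low_mono (3259/1000:ℝ) u _ (by norm_num) (by norm_num) ha12 (by norm_num)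
    have l2 : ((1277/518:ℝ) + u) ^ (0.8:ℝ) ≤ (406121/100000:ℝ) := rp_high_mono ((7466/1295:ℝ)) _ _ (by norm_num) (by linarith only [h0]) (by linarith only [hb13]) (by norm_num)
    have l3 : (921591/1000000:ℝ) * (64329/25000:ℝ) ≤ c * u ^ (0.8:ℝ) := mul_le_mul hc l1 (by norm_num) hc0
    linarith only [l2, l3, hm, hh]
  have ha13 : (33/10:ℝ) ≤ u := le_of_not_ge hb13
  clear hb13 ha12
  by_cases hb14 : u ≤ (3343/1000:ℝ)
  · have l1 : (129951/50000:ℝ) ≤ u ^ (0.8:ℝ) := rp_low_mono (33/10:ℝ) u _ (by norm_num) (by norm_num) ha13 (by norm_num)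
    have l2 : ((1277/518:ℝ) + u) ^ (0.8:ℝ) ≤ (204271/50000:ℝ) := rp_high_mono ((1504337/259000:ℝ)) _ _ (by norm_num) (by linarith only [h0]) (by linarith only [hb14]) (by norm_num)
    have l3 : (921591/1000000:ℝ) * (129951/50000:ℝ) ≤ c * u ^ (0.8:ℝ) := mul_le_mul hc l1 (by norm_num) hc0
    linarith only [l2, l3, hm, hh]
  have ha14 : (3343/1000:ℝ) ≤ u := le_of_not_ge hb14
  clear hb14 ha13
  by_cases hb15 : u ≤ (3387/1000:ℝ)
  · have l1 : (16413/6250:ℝ) ≤ u ^ (0.8:ℝ) := rp_low_mono (3343/1000:ℝ) u _ (by norm_num) (by norm_num) ha14 (by norm_num)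
    have l2 : ((1277/518:ℝ) + u) ^ (0.8:ℝ) ≤ (51377/12500:ℝ) := rp_high_mono ((1515733/259000:ℝ)) _ _ (by norm_num) (by linarith only [h0]) (by linarith only [hb15]) (by norm_num)
    have l3 : (921591/1000000:ℝ) * (16413/6250:ℝ) ≤ c * u ^ (0.8:ℝ) := mul_le_mul hc l1 (by norm_num) hc0
    linarith only [l2, l3, hm, hh]
  have ha15 : (3387/1000:ℝ) ≤ u := le_of_not_ge hb15
  clear hb15 ha14
  by_cases hb16 : u ≤ (429/125:ℝ)
  · have l1 : (26537/10000:ℝ) ≤ u ^ (0.8:ℝ) := rp_low_mono (3387/1000:ℝ) u _ (by norm_num) (by norm_num) ha15 (by norm_num)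
    have l2 : ((1277/518:ℝ) + u) ^ (0.8:ℝ) ≤ (413543/100000:ℝ) := rp_high_mono ((381847/64750:ℝ)) _ _ (by norm_num) (by linarith only [h0]) (by linarith only [hb16]) (by norm_num)
    have l3 : (921591/1000000:ℝ) * (26537/10000:ℝ) ≤ c * u ^ (0.8:ℝ) := mul_le_mul hc l1 (by norm_num) hc0
    linarith only [l2, l3, hm, hh]
  have ha16 : (429/125:ℝ) ≤ u := le_of_not_ge hb16
  clear hb16 ha15
  by_cases hb17 : u ≤ (3479/1000:ℝ)
  · have l1 : (268187/100000:ℝ) ≤ u ^ (0.8:ℝ) := rp_low_mono (429/125:ℝ) u _ (by norm_num) (by norm_num) ha16 (by norm_num)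
    have l2 : ((1277/518:ℝ) + u) ^ (0.8:ℝ) ≤ (416177/100000:ℝ) := rp_high_mono ((1539561/259000:ℝ)) _ _ (by norm_num) (by linarith only [h0]) (by linarith only [hb17]) (by norm_num)
    have l3 : (921591/1000000:ℝ) * (268187/100000:ℝ) ≤ c * u ^ (0.8:ℝ) := mul_le_mul hc l1 (by norm_num) hc0
    linarith only [l2, l3, hm, hh]
  have ha17 : (3479/1000:ℝ) ≤ u := le_of_not_ge hb17
  clear hb17 ha16
  by_cases hb18 : u ≤ (3527/1000:ℝ)
  · have l1 : (271121/100000:ℝ) ≤ u ^ (0.8:ℝ) := rp_low_mono (3479/1000:ℝ) u _ (by norm_num) (by norm_num) ha17 (by norm_num)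
    have l2 : ((1277/518:ℝ) + u) ^ (0.8:ℝ) ≤ (418863/100000:ℝ) := rp_high_mono ((1551993/259000:ℝ)) _ _ (by norm_num) (by linarith only [h0]) (by linarith only [hb18]) (by norm_num)
    have l3 : (921591/1000000:ℝ) * (271121/100000:ℝ) ≤ c * u ^ (0.8:ℝ) := mul_le_mul hc l1 (by norm_num) hc0
    linarith only [l2, l3, hm, hh]
  have ha18 : (3527/1000:ℝ) ≤ u := le_of_not_ge hb18
  clear hb18 ha17
  by_cases hb19 : u ≤ (447/125:ℝ)
  · have l1 : (274109/100000:ℝ) ≤ u ^ (0.8:ℝ) := rp_low_mono (3527/1000:ℝ) u _ (by norm_num) (by norm_num) ha18 (by norm_num)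
    have l2 : ((1277/518:ℝ) + u) ^ (0.8:ℝ) ≤ (421601/100000:ℝ) := rp_high_mono ((391171/64750:ℝ)) _ _ (by norm_num) (by linarith only [h0]) (by linarith only [hb19]) (by norm_num)
    have l3 : (921591/1000000:ℝ) * (274109/100000:ℝ) ≤ c * u ^ (0.8:ℝ) := mul_le_mul hc l1 (by norm_num) hc0
    linarith only [l2, l3, hm, hh]
  have ha19 : (447/125:ℝ) ≤ u := le_of_not_ge hb19
  clear hb19 ha18
  by_cases hb20 : u ≤ (3627/1000:ℝ)
  · have l1 : (277151/100000:ℝ) ≤ u ^ (0.8:ℝ) := rp_low_mono (447/125:ℝ) u _ (by norm_num) (by norm_num) ha19 (by norm_num)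
    have l2 : ((1277/518:ℝ) + u) ^ (0.8:ℝ) ≤ (212223/50000:ℝ) := rp_high_mono ((1577893/259000:ℝ)) _ _ (by norm_num) (by linarith only [h0]) (by linarith only [hb20]) (by norm_num)
    have l3 : (921591/1000000:ℝ) * (277151/100000:ℝ) ≤ c * u ^ (0.8:ℝ) := mul_le_mul hc l1 (by norm_num) hc0
    linarith only [l2, l3, hm, hh]
  have ha20 : (3627/1000:ℝ) ≤ u := le_of_not_ge hb20
  clear hb20 ha19
  by_cases hb21 : u ≤ (3679/1000:ℝ)
  · have l1 : (280309/100000:ℝ) ≤ u ^ (0.8:ℝ) := rp_low_mono (3627/1000:ℝ) u _ (by norm_num) (by norm_num) ha20 (by norm_num)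
    have l2 : ((1277/518:ℝ) + u) ^ (0.8:ℝ) ≤ (213671/50000:ℝ) := rp_high_mono ((1591361/259000:ℝ)) _ _ (by norm_num) (by linarith only [h0]) (by linarith only [hb21]) (by norm_num)
    have l3 : (921591/1000000:ℝ) * (280309/100000:ℝ) ≤ c * u ^ (0.8:ℝ) := mul_le_mul hc l1 (by norm_num) hc0
    linarith only [l2, l3, hm, hh]
  have ha21 : (3679/1000:ℝ) ≤ u := le_of_not_ge hb21
  clear hb21 ha20
  by_cases hb22 : u ≤ (933/250:ℝ)
  · have l1 : (1772/625:ℝ) ≤ u ^ (0.8:ℝ) := rp_low_mono (3679/1000:ℝ) u _ (by norm_num) (by norm_num) ha21 (by norm_num)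
    have l2 : ((1277/518:ℝ) + u) ^ (0.8:ℝ) ≤ (430289/100000:ℝ) := rp_high_mono ((200636/32375:ℝ)) _ _ (by norm_num) (by linarith only [h0]) (by linarith only [hb22]) (by norm_num)
    have l3 : (921591/1000000:ℝ) * (1772/625:ℝ) ≤ c * u ^ (0.8:ℝ) := mul_le_mul hc l1 (by norm_num) hc0
    linarith only [l2, l3, hm, hh]
  have ha22 : (933/250:ℝ) ≤ u := le_of_not_ge hb22
  clear hb22 ha21
  by_cases hb23 : u ≤ (1893/500:ℝ)
  · have l1 : (143391/50000:ℝ) ≤ u ^ (0.8:ℝ) := rp_low_mono (933/250:ℝ) u _ (by norm_num) (by norm_num) ha22 (by norm_num)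
    have l2 : ((1277/518:ℝ) + u) ^ (0.8:ℝ) ≤ (86657/20000:ℝ) := rp_high_mono ((809537/129500:ℝ)) _ _ (by norm_num) (by linarith only [h0]) (by linarith only [hb23]) (by norm_num)
    have l3 : (921591/1000000:ℝ) * (143391/50000:ℝ) ≤ c * u ^ (0.8:ℝ) := mul_le_mul hc l1 (by norm_num) hc0
    linarith only [l2, l3, hm, hh]
  have ha23 : (1893/500:ℝ) ≤ u := le_of_not_ge hb23
  clear hb23 ha22
  by_cases hb24 : u ≤ (3841/1000:ℝ)
  · have l1 : (290097/100000:ℝ) ≤ u ^ (0.8:ℝ) := rp_low_mono (1893/500:ℝ) u _ (by norm_num) (by norm_num) ha23 (by norm_num)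
    have l2 : ((1277/518:ℝ) + u) ^ (0.8:ℝ) ≤ (109083/25000:ℝ) := rp_high_mono ((1633319/259000:ℝ)) _ _ (by norm_num) (by linarith only [h0]) (by linarith only [hb24]) (by norm_num)
    have l3 : (921591/1000000:ℝ) * (290097/100000:ℝ) ≤ c * u ^ (0.8:ℝ) := mul_le_mul hc l1 (by norm_num) hc0
    linarith only [l2, l3, hm, hh]
  have ha24 : (3841/1000:ℝ) ≤ u := le_of_not_ge hb24
  clear hb24 ha23
  by_cases hb25 : u ≤ (3897/1000:ℝ)
  · have l1 : (36683/12500:ℝ) ≤ u ^ (0.8:ℝ) := rp_low_mono (3841/1000:ℝ) u _ (by norm_num) (by norm_num) ha24 (by norm_num)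
    have l2 : ((1277/518:ℝ) + u) ^ (0.8:ℝ) ≤ (439429/100000:ℝ) := rp_high_mono ((1647823/259000:ℝ)) _ _ (by norm_num) (by linarith only [h0]) (by linarith only [hb25]) (by norm_num)
    have l3 : (921591/1000000:ℝ) * (36683/12500:ℝ) ≤ c * u ^ (0.8:ℝ) := mul_le_mul hc l1 (by norm_num) hc0
    linarith only [l2, l3, hm, hh]
  have ha25 : (3897/1000:ℝ) ≤ u := le_of_not_ge hb25
  clear hb25 ha24
  by_cases hb26 : u ≤ (791/200:ℝ)
  · have l1 : (148441/50000:ℝ) ≤ u ^ (0.8:ℝ) := rp_low_mono (3897/1000:ℝ) u _ (by norm_num) (by norm_num) ha25 (by norm_num)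
    have l2 : ((1277/518:ℝ) + u) ^ (0.8:ℝ) ≤ (442631/100000:ℝ) := rp_high_mono ((332569/51800:ℝ)) _ _ (by norm_num) (by linarith only [h0]) (by linarith only [hb26]) (by norm_num)
    have l3 : (921591/1000000:ℝ) * (148441/50000:ℝ) ≤ c * u ^ (0.8:ℝ) := mul_le_mul hc l1 (by norm_num) hc0
    linarith only [l2, l3, hm, hh]
  have ha26 : (791/200:ℝ) ≤ u := le_of_not_ge hb26
  clear hb26 ha25
  by_cases hb27 : u ≤ (2007/500:ℝ)
  · have l1 : (300411/100000:ℝ) ≤ u ^ (0.8:ℝ) := rp_low_mono (791/200:ℝ) u _ (by norm_num) (by norm_num) ha26 (by norm_num)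
    have l2 : ((1277/518:ℝ) + u) ^ (0.8:ℝ) ≤ (222941/50000:ℝ) := rp_high_mono ((839063/129500:ℝ)) _ _ (by norm_num) (by linarith only [h0]) (by linarith only [hb27]) (by norm_num)
    have l3 : (921591/1000000:ℝ) * (300411/100000:ℝ) ≤ c * u ^ (0.8:ℝ) := mul_le_mul hc l1 (by norm_num) hc0
    linarith only [l2, l3, hm, hh]
  have ha27 : (2007/500:ℝ) ≤ u := le_of_not_ge hb27
  clear hb27 ha26
  by_cases hb28 : u ≤ (2037/500:ℝ)
  · have l1 : (303991/100000:ℝ) ≤ u ^ (0.8:ℝ) := rp_low_mono (2007/500:ℝ) u _ (by norm_num) (by norm_num) ha27 (by norm_num)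
    have l2 : ((1277/518:ℝ) + u) ^ (0.8:ℝ) ≤ (449183/100000:ℝ) := rp_high_mono ((846833/129500:ℝ)) _ _ (by norm_num) (by linarith only [h0]) (by linarith only [hb28]) (by norm_num)
    have l3 : (921591/1000000:ℝ) * (303991/100000:ℝ) ≤ c * u ^ (0.8:ℝ) := mul_le_mul hc l1 (by norm_num) hc0
    linarith only [l2, l3, hm, hh]
  have ha28 : (2037/500:ℝ) ≤ u := le_of_not_ge hb28
  clear hb28 ha27
  by_cases hb29 : u ≤ (2067/500:ℝ)
  · have l1 : (307621/100000:ℝ) ≤ u ^ (0.8:ℝ) := rp_low_mono (2037/500:ℝ) u _ (by norm_num) (by norm_num) ha28 (by norm_num)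
    have l2 : ((1277/518:ℝ) + u) ^ (0.8:ℝ) ≤ (452477/100000:ℝ) := rp_high_mono ((854603/129500:ℝ)) _ _ (by norm_num) (by linarith only [h0]) (by linarith only [hb29]) (by norm_num)
    have l3 : (921591/1000000:ℝ) * (307621/100000:ℝ) ≤ c * u ^ (0.8:ℝ) := mul_le_mul hc l1 (by norm_num) hc0
    linarith only [l2, l3, hm, hh]
  have ha29 : (2067/500:ℝ) ≤ u := le_of_not_ge hb29
  clear hb29 ha28
  by_cases hb30 : u ≤ (839/200:ℝ)
  · have l1 : (7781/2500:ℝ) ≤ u ^ (0.8:ℝ) := rp_low_mono (2067/500:ℝ) u _ (by norm_num) (by norm_num) ha29 (by norm_num)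
    have l2 : ((1277/518:ℝ) + u) ^ (0.8:ℝ) ≤ (22791/5000:ℝ) := rp_high_mono ((345001/51800:ℝ)) _ _ (by norm_num) (by linarith only [h0]) (by linarith only [hb30]) (by norm_num)
    have l3 : (921591/1000000:ℝ) * (7781/2500:ℝ) ≤ c * u ^ (0.8:ℝ) := mul_le_mul hc l1 (by norm_num) hc0
    linarith only [l2, l3, hm, hh]
  have ha30 : (839/200:ℝ) ≤ u := le_of_not_ge hb30
  clear hb30 ha29
  by_cases hb31 : u ≤ (4257/1000:ℝ)
  · have l1 : (314909/100000:ℝ) ≤ u ^ (0.8:ℝ) := rp_low_mono (839/200:ℝ) u _ (by norm_num) (by norm_num) ha30 (by norm_num)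
    have l2 : ((1277/518:ℝ) + u) ^ (0.8:ℝ) ≤ (459211/100000:ℝ) := rp_high_mono ((1741063/259000:ℝ)) _ _ (by norm_num) (by linarith only [h0]) (by linarith only [hb31]) (by norm_num)
    have l3 : (921591/1000000:ℝ) * (314909/100000:ℝ) ≤ c * u ^ (0.8:ℝ) := mul_le_mul hc l1 (by norm_num) hc0
    linarith only [l2, l3, hm, hh]
  have ha31 : (4257/1000:ℝ) ≤ u := le_of_not_ge hb31
  clear hb31 ha30
  by_cases hb32 : u ≤ (108/25:ℝ)
  · have l1 : (318627/100000:ℝ) ≤ u ^ (0.8:ℝ) := rp_low_mono (4257/1000:ℝ) u _ (by norm_num) (by norm_num) ha31 (by norm_num)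
    have l2 : ((1277/518:ℝ) + u) ^ (0.8:ℝ) ≤ (462651/100000:ℝ) := rp_high_mono ((87869/12950:ℝ)) _ _ (by norm_num) (by linarith only [h0]) (by linarith only [hb32]) (by norm_num)
    have l3 : (921591/1000000:ℝ) * (318627/100000:ℝ) ≤ c * u ^ (0.8:ℝ) := mul_le_mul hc l1 (by norm_num) hc0
    linarith only [l2, l3, hm, hh]
  have ha32 : (108/25:ℝ) ≤ u := le_of_not_ge hb32
  clear hb32 ha31
  by_cases hb33 : u ≤ (548/125:ℝ)
  · have l1 : (161197/50000:ℝ) ≤ u ^ (0.8:ℝ) := rp_low_mono (108/25:ℝ) u _ (by norm_num) (by norm_num) ha32 (by norm_num)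
    have l2 : ((1277/518:ℝ) + u) ^ (0.8:ℝ) ≤ (233069/50000:ℝ) := rp_high_mono ((443489/64750:ℝ)) _ _ (by norm_num) (by linarith only [h0]) (by linarith only [hb33]) (by norm_num)
    have l3 : (921591/1000000:ℝ) * (161197/50000:ℝ) ≤ c * u ^ (0.8:ℝ) := mul_le_mul hc l1 (by norm_num) hc0
    linarith only [l2, l3, hm, hh]
  have ha33 : (548/125:ℝ) ≤ u := le_of_not_ge hb33
  clear hb33 ha32
  by_cases hb34 : u ≤ (556/125:ℝ)
  · have l1 : (326209/100000:ℝ) ≤ u ^ (0.8:ℝ) := rp_low_mono (548/125:ℝ) u _ (by norm_num) (by norm_num) ha33 (by norm_num)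
    have l2 : ((1277/518:ℝ) + u) ^ (0.8:ℝ) ≤ (23481/5000:ℝ) := rp_high_mono ((447633/64750:ℝ)) _ _ (by norm_num) (by linarith only [h0]) (by linarith only [hb34]) (by norm_num)
    have l3 : (921591/1000000:ℝ) * (326209/100000:ℝ) ≤ c * u ^ (0.8:ℝ) := mul_le_mul hc l1 (by norm_num) hc0
    linarith only [l2, l3, hm, hh]
  have ha34 : (556/125:ℝ) ≤ u := le_of_not_ge hb34
  clear hb34 ha33
  by_cases hb35 : u ≤ (4513/1000:ℝ)
  · have l1 : (330013/100000:ℝ) ≤ u ^ (0.8:ℝ) := rp_low_mono (556/125:ℝ) u _ (by norm_num) (by norm_num) ha34 (by norm_num)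
    have l2 : ((1277/518:ℝ) + u) ^ (0.8:ℝ) ≤ (473149/100000:ℝ) := rp_high_mono ((1807367/259000:ℝ)) _ _ (by norm_num) (by linarith only [h0]) (by linarith only [hb35]) (by norm_num)
    have l3 : (921591/1000000:ℝ) * (330013/100000:ℝ) ≤ c * u ^ (0.8:ℝ) := mul_le_mul hc l1 (by norm_num) hc0
    linarith only [l2, l3, hm, hh]
  have ha35 : (4513/1000:ℝ) ≤ u := le_of_not_ge hb35
  clear hb35 ha34
  by_cases hb36 : u ≤ (2289/500:ℝ)
  · have l1 : (166933/50000:ℝ) ≤ u ^ (0.8:ℝ) := rp_low_mono (4513/1000:ℝ) u _ (by norm_num) (by norm_num) ha35 (by norm_num)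
    have l2 : ((1277/518:ℝ) + u) ^ (0.8:ℝ) ≤ (476671/100000:ℝ) := rp_high_mono ((912101/129500:ℝ)) _ _ (by norm_num) (by linarith only [h0]) (by linarith only [hb36]) (by norm_num)
    have l3 : (921591/1000000:ℝ) * (166933/50000:ℝ) ≤ c * u ^ (0.8:ℝ) := mul_le_mul hc l1 (by norm_num) hc0
    linarith only [l2, l3, hm, hh]
  have ha36 : (2289/500:ℝ) ≤ u := le_of_not_ge hb36
  clear hb36 ha35
  by_cases hb37 : u ≤ (1161/250:ℝ)
  · have l1 : (337707/100000:ℝ) ≤ u ^ (0.8:ℝ) := rp_low_mono (2289/500:ℝ) u _ (by norm_num) (by norm_num) ha36 (by norm_num)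
    have l2 : ((1277/518:ℝ) + u) ^ (0.8:ℝ) ≤ (480241/100000:ℝ) := rp_high_mono ((230162/32375:ℝ)) _ _ (by norm_num) (by linarith only [h0]) (by linarith only [hb37]) (by norm_num)
    have l3 : (921591/1000000:ℝ) * (337707/100000:ℝ) ≤ c * u ^ (0.8:ℝ) := mul_le_mul hc l1 (by norm_num) hc0
    linarith only [l2, l3, hm, hh]
  have ha37 : (1161/250:ℝ) ≤ u := le_of_not_ge hb37
  clear hb37 ha36
  by_cases hb38 : u ≤ (471/100:ℝ)
  · have l1 : (85399/25000:ℝ) ≤ u ^ (0.8:ℝ) := rp_low_mono (1161/250:ℝ) u _ (by norm_num) (by norm_num) ha37 (by norm_num)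
    have l2 : ((1277/518:ℝ) + u) ^ (0.8:ℝ) ≤ (96761/20000:ℝ) := rp_high_mono ((185839/25900:ℝ)) _ _ (by norm_num) (by linarith only [h0]) (by linarith only [hb38]) (by norm_num)
    have l3 : (921591/1000000:ℝ) * (85399/25000:ℝ) ≤ c * u ^ (0.8:ℝ) := mul_le_mul hc l1 (by norm_num) hc0
    linarith only [l2, l3, hm, hh]
  have ha38 : (471/100:ℝ) ≤ u := le_of_not_ge hb38
  clear hb38 ha37
  by_cases hb39 : u ≤ (597/125:ℝ)
  · have l1 : (13819/4000:ℝ) ≤ u ^ (0.8:ℝ) := rp_low_mono (471/100:ℝ) u _ (by norm_num) (by norm_num) ha38 (by norm_num)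
    have l2 : ((1277/518:ℝ) + u) ^ (0.8:ℝ) ≤ (243681/50000:ℝ) := rp_high_mono ((468871/64750:ℝ)) _ _ (by norm_num) (by linarith only [h0]) (by linarith only [hb39]) (by norm_num)
    have l3 : (921591/1000000:ℝ) * (13819/4000:ℝ) ≤ c * u ^ (0.8:ℝ) := mul_le_mul hc l1 (by norm_num) hc0
    linarith only [l2, l3, hm, hh]
  have ha39 : (597/125:ℝ) ≤ u := le_of_not_ge hb39
  clear hb39 ha38
  by_cases hb40 : u ≤ (4843/1000:ℝ)
  · have l1 : (174671/50000:ℝ) ≤ u ^ (0.8:ℝ) := rp_low_mono (597/125:ℝ) u _ (by norm_num) (by norm_num) ha39 (by norm_num)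
    have l2 : ((1277/518:ℝ) + u) ^ (0.8:ℝ) ≤ (245483/50000:ℝ) := rp_high_mono ((1892837/259000:ℝ)) _ _ (by norm_num) (by linarith only [h0]) (by linarith only [hb40]) (by norm_num)
    have l3 : (921591/1000000:ℝ) * (174671/50000:ℝ) ≤ c * u ^ (0.8:ℝ) := mul_le_mul hc l1 (by norm_num) hc0
    linarith only [l2, l3, hm, hh]
  have ha40 : (4843/1000:ℝ) ≤ u := le_of_not_ge hb40
  clear hb40 ha39
  have l1 : (353257/100000:ℝ) ≤ u ^ (0.8:ℝ) := rp_low_mono (4843/1000:ℝ) u _ (by norm_num) (by norm_num) ha40 (by norm_num)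
  have l2 : ((1277/518:ℝ) + u) ^ (0.8:ℝ) ≤ (246509/50000:ℝ) := rp_high_mono ((190273/25900:ℝ)) _ _ (by norm_num) (by linarith only [h0]) (by linarith only [h1]) (by norm_num)
  have l3 : (921591/1000000:ℝ) * (353257/100000:ℝ) ≤ c * u ^ (0.8:ℝ) := mul_le_mul hc l1 (by norm_num) hc0
  linarith only [l2, l3, hm, hh]



set_option maxHeartbeats 4000000 in
lemma lemB (c u : ℝ) (hc : (921591/1000000:ℝ) ≤ c) (h0 : (126423/25900:ℝ) ≤ u) :
    2 * ((125/259:ℝ)) ^ (0.8:ℝ) + (u * (50/99) - (509/259:ℝ)) ^ (0.8:ℝ) + c * u ^ (0.8:ℝ) ≥ (u * (50/99) + u) ^ (0.8:ℝ) := by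
  have hc0 : (0:ℝ) ≤ c := le_trans (by norm_num) hc
  have hm := hm_low
  by_cases hb0 : u ≤ (2463/500:ℝ)
  · have l1 : (88871/25000:ℝ) ≤ u ^ (0.8:ℝ) := rp_low_mono (126423/25900:ℝ) u _ (by norm_num) (by norm_num) h0 (by norm_num)
    have lq : (28717/50000:ℝ) ≤ (u * (50/99) - (509/259:ℝ)) ^ (0.8:ℝ) := rp_low_mono ((1/2:ℝ)) _ _ (by norm_num) (by norm_num) (by linarith only [h0]) (by norm_num)
    have l2 : (u * (50/99) + u) ^ (0.8:ℝ) ≤ (248317/50000:ℝ) := rp_high_mono ((122329/16500:ℝ)) _ _ (by norm_num) (by linarith only [h0]) (by linarith only [hb0]) (by norm_num)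
    have l3 : (921591/1000000:ℝ) * (88871/25000:ℝ) ≤ c * u ^ (0.8:ℝ) := mul_le_mul hc l1 (by norm_num) hc0
    linarith only [l2, l3, lq, hm]
  have ha0 : (2463/500:ℝ) ≤ u := le_of_not_ge hb0
  clear hb0
  by_cases hb1 : u ≤ (4981/1000:ℝ)
  · have l1 : (89523/25000:ℝ) ≤ u ^ (0.8:ℝ) := rp_low_mono (2463/500:ℝ) u _ (by norm_num) (by norm_num) ha0 (by norm_num)
    have lq : (11901/20000:ℝ) ≤ (u * (50/99) - (509/259:ℝ)) ^ (0.8:ℝ) := rp_low_mono ((44669/85470:ℝ)) _ _ (by norm_num) (by norm_num) (by linarith only [ha0]) (by norm_num)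
    have l2 : (u * (50/99) + u) ^ (0.8:ℝ) ≤ (250533/50000:ℝ) := rp_high_mono ((742169/99000:ℝ)) _ _ (by norm_num) (by linarith only [h0]) (by linarith only [hb1]) (by norm_num)
    have l3 : (921591/1000000:ℝ) * (89523/25000:ℝ) ≤ c * u ^ (0.8:ℝ) := mul_le_mul hc l1 (by norm_num) hc0
    linarith only [l2, l3, lq, hm]
  have ha1 : (4981/1000:ℝ) ≤ u := le_of_not_ge hb1
  clear hb1 ha0
  by_cases hb2 : u ≤ (5049/1000:ℝ)
  · have l1 : (361287/100000:ℝ) ≤ u ^ (0.8:ℝ) := rp_low_mono (4981/1000:ℝ) u _ (by norm_num) (by norm_num) ha1 (by norm_num)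
    have lq : (31011/50000:ℝ) ≤ (u * (50/99) - (509/259:ℝ)) ^ (0.8:ℝ) := rp_low_mono ((282259/512820:ℝ)) _ _ (by norm_num) (by norm_num) (by linarith only [ha1]) (by norm_num)
    have l2 : (u * (50/99) + u) ^ (0.8:ℝ) ≤ (50653/10000:ℝ) := rp_high_mono ((7599/1000:ℝ)) _ _ (by norm_num) (by linarith only [h0]) (by linarith only [hb2]) (by norm_num)
    have l3 : (921591/1000000:ℝ) * (361287/100000:ℝ) ≤ c * u ^ (0.8:ℝ) := mul_le_mul hc l1 (by norm_num) hc0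
    linarith only [l2, l3, lq, hm]
  have ha2 : (5049/1000:ℝ) ≤ u := le_of_not_ge hb2
  clear hb2 ha1
  by_cases hb3 : u ≤ (5133/1000:ℝ)
  · have l1 : (91307/25000:ℝ) ≤ u ^ (0.8:ℝ) := rp_low_mono (5049/1000:ℝ) u _ (by norm_num) (by norm_num) ha2 (by norm_num)
    have lq : (65099/100000:ℝ) ≤ (u * (50/99) - (509/259:ℝ)) ^ (0.8:ℝ) := rp_low_mono ((3029/5180:ℝ)) _ _ (by norm_num) (by norm_num) (by linarith only [ha2]) (by norm_num)
    have l2 : (u * (50/99) + u) ^ (0.8:ℝ) ≤ (513261/100000:ℝ) := rp_high_mono ((254939/33000:ℝ)) _ _ (by norm_num) (by linarith only [h0]) (by linarith only [hb3]) (by norm_num)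
    have l3 : (921591/1000000:ℝ) * (91307/25000:ℝ) ≤ c * u ^ (0.8:ℝ) := mul_le_mul hc l1 (by norm_num) hc0
    linarith only [l2, l3, lq, hm]
  have ha3 : (5133/1000:ℝ) ≤ u := le_of_not_ge hb3
  clear hb3 ha2
  by_cases hb4 : u ≤ (1309/250:ℝ)
  · have l1 : (370081/100000:ℝ) ≤ u ^ (0.8:ℝ) := rp_low_mono (5133/1000:ℝ) u _ (by norm_num) (by norm_num) ha3 (by norm_num)
    have lq : (1377/2000:ℝ) ≤ (u * (50/99) - (509/259:ℝ)) ^ (0.8:ℝ) := rp_low_mono ((107209/170940:ℝ)) _ _ (by norm_num) (by norm_num) (by linarith only [ha3]) (by norm_num)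
    have l2 : (u * (50/99) + u) ^ (0.8:ℝ) ≤ (130371/25000:ℝ) := rp_high_mono ((17731/2250:ℝ)) _ _ (by norm_num) (by linarith only [h0]) (by linarith only [hb4]) (by norm_num)
    have l3 : (921591/1000000:ℝ) * (370081/100000:ℝ) ≤ c * u ^ (0.8:ℝ) := mul_le_mul hc l1 (by norm_num) hc0
    linarith only [l2, l3, lq, hm]
  have ha4 : (1309/250:ℝ) ≤ u := le_of_not_ge hb4
  clear hb4 ha3
  by_cases hb5 : u ≤ (2681/500:ℝ)
  · have l1 : (37601/10000:ℝ) ≤ u ^ (0.8:ℝ) := rp_low_mono (1309/250:ℝ) u _ (by norm_num) (by norm_num) ha4 (by norm_num)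
    have lq : (36691/50000:ℝ) ≤ (u * (50/99) - (509/259:ℝ)) ^ (0.8:ℝ) := rp_low_mono ((7916/11655:ℝ)) _ _ (by norm_num) (by norm_num) (by linarith only [ha4]) (by norm_num)
    have l2 : (u * (50/99) + u) ^ (0.8:ℝ) ≤ (531499/100000:ℝ) := rp_high_mono ((399469/49500:ℝ)) _ _ (by norm_num) (by linarith only [h0]) (by linarith only [hb5]) (by norm_num)
    have l3 : (921591/1000000:ℝ) * (37601/10000:ℝ) ≤ c * u ^ (0.8:ℝ) := mul_le_mul hc l1 (by norm_num) hc0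
    linarith only [l2, l3, lq, hm]
  have ha5 : (2681/500:ℝ) ≤ u := le_of_not_ge hb5
  clear hb5 ha4
  by_cases hb6 : u ≤ (1103/200:ℝ)
  · have l1 : (383231/100000:ℝ) ≤ u ^ (0.8:ℝ) := rp_low_mono (2681/500:ℝ) u _ (by norm_num) (by norm_num) ha5 (by norm_num)
    have lq : (78833/100000:ℝ) ≤ (u * (50/99) - (509/259:ℝ)) ^ (0.8:ℝ) := rp_low_mono ((190469/256410:ℝ)) _ _ (by norm_num) (by norm_num) (by linarith only [ha5]) (by norm_num)
    have l2 : (u * (50/99) + u) ^ (0.8:ℝ) ≤ (271799/50000:ℝ) := rp_high_mono ((164347/19800:ℝ)) _ _ (by norm_num) (by linarith only [h0]) (by linarith only [hb6]) (by norm_num)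
    have l3 : (921591/1000000:ℝ) * (383231/100000:ℝ) ≤ c * u ^ (0.8:ℝ) := mul_le_mul hc l1 (by norm_num) hc0
    linarith only [l2, l3, lq, hm]
  have ha6 : (1103/200:ℝ) ≤ u := le_of_not_ge hb6
  clear hb6 ha5
  by_cases hb7 : u ≤ (57/10:ℝ)
  · have l1 : (78391/20000:ℝ) ≤ u ^ (0.8:ℝ) := rp_low_mono (1103/200:ℝ) u _ (by norm_num) (by norm_num) ha6 (by norm_num)
    have lq : (5333/6250:ℝ) ≤ (u * (50/99) - (509/259:ℝ)) ^ (0.8:ℝ) := rp_low_mono ((84113/102564:ℝ)) _ _ (by norm_num) (by norm_num) (by linarith only [ha6]) (by norm_num)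
    have l2 : (u * (50/99) + u) ^ (0.8:ℝ) ≤ (558137/100000:ℝ) := rp_high_mono ((2831/330:ℝ)) _ _ (by norm_num) (by linarith only [h0]) (by linarith only [hb7]) (by norm_num)
    have l3 : (921591/1000000:ℝ) * (78391/20000:ℝ) ≤ c * u ^ (0.8:ℝ) := mul_le_mul hc l1 (by norm_num) hc0
    linarith only [l2, l3, lq, hm]
  have ha7 : (57/10:ℝ) ≤ u := le_of_not_ge hb7
  clear hb7 ha6
  by_cases hb8 : u ≤ (2961/500:ℝ)
  · have l1 : (201219/50000:ℝ) ≤ u ^ (0.8:ℝ) := rp_low_mono (57/10:ℝ) u _ (by norm_num) (by norm_num) ha7 (by norm_num)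
    have lq : (4651/5000:ℝ) ≤ (u * (50/99) - (509/259:ℝ)) ^ (0.8:ℝ) := rp_low_mono ((7808/8547:ℝ)) _ _ (by norm_num) (by norm_num) (by linarith only [ha7]) (by norm_num)
    have l2 : (u * (50/99) + u) ^ (0.8:ℝ) ≤ (575461/100000:ℝ) := rp_high_mono ((49021/5500:ℝ)) _ _ (by norm_num) (by linarith only [h0]) (by linarith only [hb8]) (by norm_num)
    have l3 : (921591/1000000:ℝ) * (201219/50000:ℝ) ≤ c * u ^ (0.8:ℝ) := mul_le_mul hc l1 (by norm_num) hc0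
    linarith only [l2, l3, lq, hm]
  have ha8 : (2961/500:ℝ) ≤ u := le_of_not_ge hb8
  clear hb8 ha7
  by_cases hb9 : u ≤ (6187/1000:ℝ)
  · have l1 : (414929/100000:ℝ) ≤ u ^ (0.8:ℝ) := rp_low_mono (2961/500:ℝ) u _ (by norm_num) (by norm_num) ha8 (by norm_num)
    have lq : (102047/100000:ℝ) ≤ (u * (50/99) - (509/259:ℝ)) ^ (0.8:ℝ) := rp_low_mono ((29221/28490:ℝ)) _ _ (by norm_num) (by norm_num) (by linarith only [ha8]) (by norm_num)
    have l2 : (u * (50/99) + u) ^ (0.8:ℝ) ≤ (595971/100000:ℝ) := rp_high_mono ((921863/99000:ℝ)) _ _ (by norm_num) (by linarith only [h0]) (by linarith only [hb9]) (by norm_num)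
    have l3 : (921591/1000000:ℝ) * (414929/100000:ℝ) ≤ c * u ^ (0.8:ℝ) := mul_le_mul hc l1 (by norm_num) hc0
    linarith only [l2, l3, lq, hm]
  have ha9 : (6187/1000:ℝ) ≤ u := le_of_not_ge hb9
  clear hb9 ha8
  by_cases hb10 : u ≤ (3251/500:ℝ)
  · have l1 : (214859/50000:ℝ) ≤ u ^ (0.8:ℝ) := rp_low_mono (6187/1000:ℝ) u _ (by norm_num) (by norm_num) ha9 (by norm_num)
    have lq : (14071/12500:ℝ) ≤ (u * (50/99) - (509/259:ℝ)) ^ (0.8:ℝ) := rp_low_mono ((594613/512820:ℝ)) _ _ (by norm_num) (by norm_num) (by linarith only [ha9]) (by norm_num)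
    have l2 : (u * (50/99) + u) ^ (0.8:ℝ) ≤ (155031/25000:ℝ) := rp_high_mono ((484399/49500:ℝ)) _ _ (by norm_num) (by linarith only [h0]) (by linarith only [hb10]) (by norm_num)
    have l3 : (921591/1000000:ℝ) * (214859/50000:ℝ) ≤ c * u ^ (0.8:ℝ) := mul_le_mul hc l1 (by norm_num) hc0
    linarith only [l2, l3, lq, hm]
  have ha10 : (3251/500:ℝ) ≤ u := le_of_not_ge hb10
  clear hb10 ha9
  by_cases hb11 : u ≤ (55/8:ℝ)
  · have l1 : (447133/100000:ℝ) ≤ u ^ (0.8:ℝ) := rp_low_mono (3251/500:ℝ) u _ (by norm_num) (by norm_num) ha10 (by norm_num)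
    have lq : (124763/100000:ℝ) ≤ (u * (50/99) - (509/259:ℝ)) ^ (0.8:ℝ) := rp_low_mono ((338099/256410:ℝ)) _ _ (by norm_num) (by norm_num) (by linarith only [ha10]) (by norm_num)
    have l2 : (u * (50/99) + u) ^ (0.8:ℝ) ≤ (81053/12500:ℝ) := rp_high_mono ((745/72:ℝ)) _ _ (by norm_num) (by linarith only [h0]) (by linarith only [hb11]) (by norm_num)
    have l3 : (921591/1000000:ℝ) * (447133/100000:ℝ) ≤ c * u ^ (0.8:ℝ) := mul_le_mul hc l1 (by norm_num) hc0
    linarith only [l2, l3, lq, hm]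
  have ha11 : (55/8:ℝ) ≤ u := le_of_not_ge hb11
  clear hb11 ha10
  by_cases hb12 : u ≤ (7313/1000:ℝ)
  · have l1 : (467539/100000:ℝ) ≤ u ^ (0.8:ℝ) := rp_low_mono (55/8:ℝ) u _ (by norm_num) (by norm_num) ha11 (by norm_num)
    have lq : (13883/10000:ℝ) ≤ (u * (50/99) - (509/259:ℝ)) ^ (0.8:ℝ) := rp_low_mono ((14051/9324:ℝ)) _ _ (by norm_num) (by norm_num) (by linarith only [ha11]) (by norm_num)
    have l2 : (u * (50/99) + u) ^ (0.8:ℝ) ≤ (681267/100000:ℝ) := rp_high_mono ((1089637/99000:ℝ)) _ _ (by norm_num) (by linarith only [h0]) (by linarith only [hb12]) (by norm_num)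
    have l3 : (921591/1000000:ℝ) * (467539/100000:ℝ) ≤ c * u ^ (0.8:ℝ) := mul_le_mul hc l1 (by norm_num) hc0
    linarith only [l2, l3, lq, hm]
  have ha12 : (7313/1000:ℝ) ≤ u := le_of_not_ge hb12
  clear hb12 ha11
  by_cases hb13 : u ≤ (313/40:ℝ)
  · have l1 : (24561/5000:ℝ) ≤ u ^ (0.8:ℝ) := rp_low_mono (7313/1000:ℝ) u _ (by norm_num) (by norm_num) ha12 (by norm_num)
    have lq : (154907/100000:ℝ) ≤ (u * (50/99) - (509/259:ℝ)) ^ (0.8:ℝ) := rp_low_mono ((886247/512820:ℝ)) _ _ (by norm_num) (by norm_num) (by linarith only [ha12]) (by norm_num)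
    have l2 : (u * (50/99) + u) ^ (0.8:ℝ) ≤ (143833/20000:ℝ) := rp_high_mono ((46637/3960:ℝ)) _ _ (by norm_num) (by linarith only [h0]) (by linarith only [hb13]) (by norm_num)
    have l3 : (921591/1000000:ℝ) * (24561/5000:ℝ) ≤ c * u ^ (0.8:ℝ) := mul_le_mul hc l1 (by norm_num) hc0
    linarith only [l2, l3, lq, hm]
  have ha13 : (313/40:ℝ) ≤ u := le_of_not_ge hb13
  clear hb13 ha12
  by_cases hb14 : u ≤ (8421/1000:ℝ)
  · have l1 : (259273/50000:ℝ) ≤ u ^ (0.8:ℝ) := rp_low_mono (313/40:ℝ) u _ (by norm_num) (by norm_num) ha13 (by norm_num)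
    have lq : (43297/25000:ℝ) ≤ (u * (50/99) - (509/259:ℝ)) ^ (0.8:ℝ) := rp_low_mono ((203771/102564:ℝ)) _ _ (by norm_num) (by norm_num) (by linarith only [ha13]) (by norm_num)
    have l2 : (u * (50/99) + u) ^ (0.8:ℝ) ≤ (381331/50000:ℝ) := rp_high_mono ((418243/33000:ℝ)) _ _ (by norm_num) (by linarith only [h0]) (by linarith only [hb14]) (by norm_num)
    have l3 : (921591/1000000:ℝ) * (259273/50000:ℝ) ≤ c * u ^ (0.8:ℝ) := mul_le_mul hc l1 (by norm_num) hc0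
    linarith only [l2, l3, lq, hm]
  have ha14 : (8421/1000:ℝ) ≤ u := le_of_not_ge hb14
  clear hb14 ha13
  by_cases hb15 : u ≤ (9:ℝ)
  · have l1 : (549909/100000:ℝ) ≤ u ^ (0.8:ℝ) := rp_low_mono (8421/1000:ℝ) u _ (by norm_num) (by norm_num) ha14 (by norm_num)
    have lq : (193879/100000:ℝ) ≤ (u * (50/99) - (509/259:ℝ)) ^ (0.8:ℝ) := rp_low_mono ((391073/170940:ℝ)) _ _ (by norm_num) (by norm_num) (by linarith only [ha14]) (by norm_num)
    have l2 : (u * (50/99) + u) ^ (0.8:ℝ) ≤ (201083/25000:ℝ) := rp_high_mono ((149/11:ℝ)) _ _ (by norm_num) (by linarith only [h0]) (by linarith only [hb15]) (by norm_num)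
    have l3 : (921591/1000000:ℝ) * (549909/100000:ℝ) ≤ c * u ^ (0.8:ℝ) := mul_le_mul hc l1 (by norm_num) hc0
    linarith only [l2, l3, lq, hm]
  have ha15 : (9:ℝ) ≤ u := le_of_not_ge hb15
  clear hb15 ha14
  -- crude bound for u ≥ 9
  have h9 : (9:ℝ) ≤ u := by linarith
  have hu0 : (0:ℝ) ≤ u := by linarith
  have hur : (0:ℝ) ≤ u ^ (0.8:ℝ) := Real.rpow_nonneg hu0 _
  have l9 : (289977/50000:ℝ) ≤ u ^ (0.8:ℝ) := rp_low_mono 9 u _ (by norm_num) (by norm_num) h9 (by norm_num)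
  have l50 : (28949/50000:ℝ) ≤ ((50:ℝ)/99) ^ (0.8:ℝ) := rp_low _ _ (by norm_num) (by norm_num) (by norm_num)
  have h149 : ((149:ℝ)/99) ^ (0.8:ℝ) ≤ (138689/100000:ℝ) := rp_high _ _ (by norm_num) (by norm_num) (by norm_num)
  have hk1 : ((509/259:ℝ):ℝ) ^ (0.8:ℝ) ≤ (85843/50000:ℝ) := rp_high _ _ (by norm_num) (by norm_num) (by norm_num)
  have e1 : (u * (50/99) + u) ^ (0.8:ℝ) = ((149:ℝ)/99) ^ (0.8:ℝ) * u ^ (0.8:ℝ) := by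
    rw [← Real.mul_rpow (by norm_num) hu0]; congr 1; ring
  have e2 : (u * (50/99)) ^ (0.8:ℝ) = ((50:ℝ)/99) ^ (0.8:ℝ) * u ^ (0.8:ℝ) := by
    rw [← Real.mul_rpow (by norm_num) hu0]; congr 1; ring
  have hsub := rearr 0 (u * (50/99) - (509/259:ℝ)) ((509/259:ℝ):ℝ) le_rfl (by linarith) (by norm_num)
  rw [Real.zero_rpow (by norm_num), zero_add] at hsub
  have e3 : u * (50/99) - (509/259:ℝ) + ((509/259:ℝ):ℝ) = u * (50/99) := by ring
  rw [e3, add_zero] at hsub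
  rw [e2] at hsub
  have b1 : (28949/50000:ℝ) * u ^ (0.8:ℝ) ≤ ((50:ℝ)/99) ^ (0.8:ℝ) * u ^ (0.8:ℝ) := mul_le_mul_of_nonneg_right l50 hur
  have b2 : (921591/1000000:ℝ) * u ^ (0.8:ℝ) ≤ c * u ^ (0.8:ℝ) := mul_le_mul_of_nonneg_right hc hur
  have b3 : ((149:ℝ)/99) ^ (0.8:ℝ) * u ^ (0.8:ℝ) ≤ (138689/100000:ℝ) * u ^ (0.8:ℝ) := mul_le_mul_of_nonneg_right h149 hur
  have b4 : ((113681/1000000:ℝ):ℝ) * (289977/50000:ℝ) ≤ ((113681/1000000:ℝ):ℝ) * u ^ (0.8:ℝ) := mul_le_mul_of_nonneg_left l9 (by norm_num)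
  have final : ((85843/50000:ℝ):ℝ) - 2 * (6979/12500:ℝ) ≤ ((113681/1000000:ℝ):ℝ) * (289977/50000:ℝ) := by norm_num
  rw [e1]
  linarith [hm, hk1, b1, b2, b3, b4, final, hsub]




lemma lemQ (c σ u : ℝ) (hc : (921591/1000000:ℝ) ≤ c) (hσ : (1277/518:ℝ) ≤ σ)
    (hu0 : (1471/518:ℝ) ≤ u) (hu1 : u ≤ (99/50) * σ) :
    2 * ((125/259:ℝ)) ^ (0.8:ℝ) + (σ - (509/259:ℝ)) ^ (0.8:ℝ) + c * u ^ (0.8:ℝ) ≥ (σ + u) ^ (0.8:ℝ) := by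
  by_cases hcase : u ≤ (126423/25900:ℝ)
  · have hre := rearr (1/2) (σ - (509/259:ℝ)) (u + (509/259:ℝ)) (by norm_num) (by linarith) (by linarith)
    have e1 : σ - (509/259:ℝ) + (u + (509/259:ℝ)) = σ + u := by ring
    have e2 : 1/2 + (u + (509/259:ℝ)) = (1277/518:ℝ) + u := by ring
    rw [e1, e2] at hre
    have hA := lemA c u hc hu0 hcase
    linarith [hA, hre]
  · have htop : (126423/25900:ℝ) ≤ u := le_of_not_ge hcase
    have hre := rearr (u * (50/99) - (509/259:ℝ)) (σ - (509/259:ℝ)) (u + (509/259:ℝ))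
      (by linarith) (by linarith) (by linarith)
    have e1 : σ - (509/259:ℝ) + (u + (509/259:ℝ)) = σ + u := by ring
    have e2 : u * (50/99) - (509/259:ℝ) + (u + (509/259:ℝ)) = u * (50/99) + u := by ring
    rw [e1, e2] at hre
    have hB := lemB c u hc htop
    linarith [hB, hre]


set_option maxHeartbeats 1000000 in
theorem stmt_4 (r c : ℝ) (hr : r = 0.8)
    (hc : c = 1 / ((8 : ℝ) ^ r - (6 : ℝ) ^ r))
    (t w x y z : ℝ)
    (hw0 : 0 ≤ w) (hx0 : 0 ≤ x) (hy0 : 0 ≤ y) (hz0 : 0 ≤ z)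
    (hz : z < 1.98 * (t + w + x + y))
    (ht0 : 0 < t)
    (ht : t ≤ 2.072 * min (w / 1.036) (min x (min y (z / 5.884)))) :
    w ^ r + x ^ r + y ^ r + c * z ^ r ≥ (t + w + x + y + z) ^ r := by
  subst hr
  have hclo : (921591/1000000:ℝ) ≤ c := by rw [hc]; exact c_bound
  -- extract the four lower bounds
  have m1 : t ≤ 2.072 * (w / 1.036) :=
    le_trans ht (by gcongr; exact min_le_left _ _)
  have m2 : t ≤ 2.072 * x :=
    le_trans ht (by gcongr; exact le_trans (min_le_right _ _) (min_le_left _ _))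
  have m3 : t ≤ 2.072 * y :=
    le_trans ht (by gcongr; exact le_trans (min_le_right _ _) (le_trans (min_le_right _ _) (min_le_left _ _)))
  have m4 : t ≤ 2.072 * (z / 5.884) :=
    le_trans ht (by gcongr; exact le_trans (min_le_right _ _) (le_trans (min_le_right _ _) (min_le_right _ _)))
  have hne : t ≠ 0 := ne_of_gt ht0
  have ew : 2.072 * (w / 1.036) = 2 * w := by ring
  have ez : 2.072 * (z / 5.884) = z * (518/1471) := by ring
  rw [ew] at m1
  rw [ez] at m4
  have hw : t / 2 ≤ w := by linarith
  have hx : t * ((125/259:ℝ)) ≤ x := by linarith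
  have hy : t * ((125/259:ℝ)) ≤ y := by linarith
  have hzl : t * ((1471/518:ℝ)) ≤ z := by linarith
  have htm0 : (0:ℝ) ≤ t * ((125/259:ℝ)) := by positivity
  -- step 1 : push x, y down to the minimum, excess to w
  have r1 := rearr (t * ((125/259:ℝ))) w (x - t * ((125/259:ℝ))) htm0 (by linarith) (by linarith)
  have e1 : t * ((125/259:ℝ)) + (x - t * ((125/259:ℝ))) = x := by ring
  have e2 : w + (x - t * ((125/259:ℝ))) = w + x - t * ((125/259:ℝ)) := by ring
  rw [e1, e2] at r1
  have r2 := rearr (t * ((125/259:ℝ))) (w + x - t * ((125/259:ℝ))) (y - t * ((125/259:ℝ))) htm0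
    (by linarith) (by linarith)
  have e3 : t * ((125/259:ℝ)) + (y - t * ((125/259:ℝ))) = y := by ring
  have e4 : w + x - t * ((125/259:ℝ)) + (y - t * ((125/259:ℝ))) = w + x + y - 2 * (t * ((125/259:ℝ))) := by ring
  rw [e3, e4] at r2
  -- step 2 : scaled core inequality
  have hz' : z / t ≤ (99/50) * ((t + w + x + y) / t) := by
    rw [div_le_iff₀ ht0]
    have e : 99 / 50 * ((t + w + x + y) / t) * t = 99 / 50 * (t + w + x + y) := by
      field_simp
    rw [e]
    norm_num at hz
    linarith
  have hQ := lemQ c ((t + w + x + y) / t) (z / t) hclo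
    (by rw [le_div_iff₀ ht0]; linarith)
    (by rw [le_div_iff₀ ht0]; linarith)
    hz'
  have hts : (0:ℝ) < t ^ (0.8:ℝ) := Real.rpow_pos_of_pos ht0 _
  have htle : (0:ℝ) ≤ t := ht0.le
  have hσk : (0:ℝ) ≤ (t + w + x + y) / t - (509/259:ℝ) := by
    rw [sub_nonneg, le_div_iff₀ ht0]; nlinarith
  have q1 : (t * ((125/259:ℝ))) ^ (0.8:ℝ) = t ^ (0.8:ℝ) * ((125/259:ℝ):ℝ) ^ (0.8:ℝ) := Real.mul_rpow htle (by norm_num)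
  have q2 : (w + x + y - 2 * (t * ((125/259:ℝ)))) ^ (0.8:ℝ) = t ^ (0.8:ℝ) * ((t + w + x + y) / t - (509/259:ℝ)) ^ (0.8:ℝ) := by
    rw [← Real.mul_rpow htle hσk]
    congr 1
    field_simp
    ring
  have q3 : z ^ (0.8:ℝ) = t ^ (0.8:ℝ) * (z / t) ^ (0.8:ℝ) := by
    rw [← Real.mul_rpow htle (by positivity)]
    congr 1
    field_simp
  have q4 : (t + w + x + y + z) ^ (0.8:ℝ) = t ^ (0.8:ℝ) * ((t + w + x + y) / t + z / t) ^ (0.8:ℝ) := by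
    rw [← Real.mul_rpow htle (by positivity)]
    congr 1
    field_simp
  have hmul := mul_le_mul_of_nonneg_left (sub_nonneg.2 hQ) hts.le
  rw [mul_zero] at hmul
  have key : 2 * (t * ((125/259:ℝ))) ^ (0.8:ℝ) + (w + x + y - 2 * (t * ((125/259:ℝ)))) ^ (0.8:ℝ) + c * z ^ (0.8:ℝ)
      ≥ (t + w + x + y + z) ^ (0.8:ℝ) := by
    rw [q1, q2, q3, q4]
    nlinarith [hmul]
  linarith [r1, r2, key]
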